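/- Let α > 0, c > 0 and λ₂ > 0. Define u₂(t) = λ₂ / (1 + (c/2) λ₂ t) and v₂(t) = 1 / (2 (1 + (c/2) λ₂ t)²). Let u₁ : [0,∞) → ℝ be continuous with u₁(t) ≥ 0 for all t, and let v₁ : [0,∞) → ℝ be differentiable with v₁(0) = 1/2 and v₁'(t) = −α v₁(t) + α v₂(t) − c u₁(t) v₁(t) for all t ≥ 0. Then for all t ≥ 0: v₁(t) ≤ e^{−α t}/2 + e^{−α t/2}/2 + α / (c λ₂ (1 + (c/4) λ₂ t)). In particular v₁(t) → 0 as t → ∞. -/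

import Mathlib

open Filter Topology

set_option maxHeartbeats 1000000 in
/-- (From the proof of Proposition 4.3 (c) of the paper.) For the
two-type critical model with mutation matrix `[[−α, α], [0, 0]]`: with
`u₂(t) = λ₂/(1 + (c/2)λ₂ t)`, `v₂(t) = 1/(2(1 + (c/2)λ₂ t)²)`, any `u₁ ≥ 0`
continuous and `v₁` solving `v₁' = −α v₁ + α v₂ − c u₁ v₁`, `v₁(0) = 1/2`, satisfies
`v₁(t) ≤ e^{−αt}/2 + e^{−αt/2}/2 + α/(cλ₂(1 + (c/4)λ₂ t))`; in particular
`v₁(t) → 0` as `t → ∞`. -/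
theorem stmt17 (α c lam₂ : ℝ) (hα : 0 < α) (hc : 0 < c) (hlam₂ : 0 < lam₂)
    (u₂ v₂ : ℝ → ℝ)
    (hu₂ : ∀ t, u₂ t = lam₂ / (1 + c / 2 * lam₂ * t))
    (hv₂ : ∀ t, v₂ t = 1 / (2 * (1 + c / 2 * lam₂ * t) ^ 2))
    (u₁ : ℝ → ℝ) (hu₁cont : Continuous u₁) (hu₁pos : ∀ t, 0 ≤ u₁ t)
    (v₁ : ℝ → ℝ) (hv₁0 : v₁ 0 = 1 / 2)
    (hv₁ : ∀ t ≥ (0 : ℝ),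
      HasDerivAt v₁ (-(α * v₁ t) + α * v₂ t - c * u₁ t * v₁ t) t) :
    (∀ t ≥ (0 : ℝ),
      v₁ t ≤ Real.exp (-(α * t)) / 2 + Real.exp (-(α * t / 2)) / 2 +
        α / (c * lam₂ * (1 + c / 4 * lam₂ * t))) ∧
    Tendsto v₁ atTop (𝓝 0) := by
  clear hu₂
  have hv₂eq : v₂ = fun t => 1 / (2 * (1 + c / 2 * lam₂ * t) ^ 2) := funext hv₂
  subst hv₂eq
  set v₂ : ℝ → ℝ := fun t => 1 / (2 * (1 + c / 2 * lam₂ * t) ^ 2) with hv₂def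
  -- basic positivity facts
  have hden : ∀ s : ℝ, 0 ≤ s → 0 < 1 + c / 2 * lam₂ * s := by
    intro s hs
    have : 0 ≤ c / 2 * lam₂ * s := by positivity
    linarith
  have hv₂nn : ∀ s : ℝ, 0 ≤ s → 0 ≤ v₂ s := by
    intro s hs
    have := hden s hs
    simp only [hv₂def]
    positivity
  have hv₂le : ∀ s : ℝ, 0 ≤ s → v₂ s ≤ 1 / 2 := by
    intro s hs
    have h := hden s hs
    simp only [hv₂def]
    rw [div_le_div_iff₀ (by positivity) (by norm_num)]
    have hx : 0 ≤ c / 2 * lam₂ * s := by positivity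
    nlinarith [sq_nonneg (c / 2 * lam₂ * s)]
  have hsub : ∀ a b : ℝ, 0 ≤ a → 0 ≤ b → Set.uIcc a b ⊆ Set.Ici (0:ℝ) := by
    intro a b ha hb x hx
    rcases Set.mem_uIcc.1 hx with h | h
    · exact le_trans ha h.1
    · exact le_trans hb h.1
  have hv₂cont : ContinuousOn v₂ (Set.Ici (0:ℝ)) := by
    apply ContinuousOn.div continuousOn_const (by fun_prop)
    intro s hs
    have := hden s hs
    positivity
  -- the integrating factor
  have hfc : Continuous fun s : ℝ => α + c * u₁ s := by fun_prop
  set F : ℝ → ℝ := fun t => ∫ s in (0:ℝ)..t, (α + c * u₁ s) with hFdef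
  have hF : ∀ t : ℝ, HasDerivAt F (α + c * u₁ t) t := fun t =>
    (hfc.integral_hasStrictDerivAt 0 t).hasDerivAt
  have hFc : Continuous F := by
    rw [continuous_iff_continuousAt]
    exact fun t => (hF t).continuousAt
  have hF0 : F 0 = 0 := intervalIntegral.integral_same
  have hFdiff : ∀ s t : ℝ, F t - F s = ∫ x in s..t, (α + c * u₁ x) := by
    intro s t
    have h1 := intervalIntegral.integral_add_adjacent_intervals
      (hfc.intervalIntegrable (μ := MeasureTheory.volume) 0 s) (hfc.intervalIntegrable (μ := MeasureTheory.volume) s t)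
    simp only [hFdef]
    linarith
  have hFge : ∀ s t : ℝ, s ≤ t → α * (t - s) ≤ F t - F s := by
    intro s t hst
    rw [hFdiff s t]
    calc α * (t - s) = ∫ _ in s..t, α := by
          rw [intervalIntegral.integral_const, smul_eq_mul]; ring
      _ ≤ ∫ x in s..t, (α + c * u₁ x) := by
          apply intervalIntegral.integral_mono_on hst intervalIntegrable_const
            (hfc.intervalIntegrable s t)
          intro x _
          nlinarith [hu₁pos x]
  have hexpFc : Continuous fun s : ℝ => Real.exp (F s) := Real.continuous_exp.comp hFc
  -- main pointwise bound together with nonnegativity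
  have main : ∀ t ≥ (0:ℝ), 0 ≤ v₁ t ∧
      v₁ t ≤ Real.exp (-(α * t)) / 2 + Real.exp (-(α * t / 2)) / 2 +
        α / (c * lam₂ * (1 + c / 4 * lam₂ * t)) := by
    intro t ht
    have huIcc : Set.uIcc (0:ℝ) t = Set.Icc 0 t := Set.uIcc_of_le ht
    have hgder : ∀ s ∈ Set.uIcc (0:ℝ) t,
        HasDerivAt (fun x => v₁ x * Real.exp (F x)) (α * v₂ s * Real.exp (F s)) s := by
      intro s hs
      rw [huIcc] at hs
      have hs0 : 0 ≤ s := hs.1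
      have h := (hv₁ s hs0).fun_mul ((hF s).exp)
      exact h.congr_deriv (by ring)
    have hgint : IntervalIntegrable (fun s => α * v₂ s * Real.exp (F s)) MeasureTheory.volume 0 t := by
      apply ContinuousOn.intervalIntegrable
      exact ((continuousOn_const.mul (hv₂cont.mono (hsub 0 t le_rfl ht))).mul
        hexpFc.continuousOn)
    have key : ∫ s in (0:ℝ)..t, α * v₂ s * Real.exp (F s)
        = v₁ t * Real.exp (F t) - 1 / 2 := by
      rw [intervalIntegral.integral_eq_sub_of_hasDerivAt hgder hgint]
      rw [hF0, hv₁0, Real.exp_zero]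
      ring
    set I : ℝ := ∫ s in (0:ℝ)..t, α * v₂ s * Real.exp (F s) with hIdef
    have hInn : 0 ≤ I := by
      apply intervalIntegral.integral_nonneg ht
      intro s hs
      have := hv₂nn s hs.1
      positivity
    have hrep : v₁ t = Real.exp (-F t) * (1 / 2) + Real.exp (-F t) * I := by
      have h2 : v₁ t * Real.exp (F t) = 1 / 2 + I := by rw [hIdef] at key ⊢; linarith
      have h3 := congrArg (fun x => x * Real.exp (-F t)) h2
      rw [mul_assoc, ← Real.exp_add, add_neg_cancel, Real.exp_zero, mul_one] at h3
      rw [h3]; ring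
    have hnn : 0 ≤ v₁ t := by
      rw [hrep]
      positivity
    refine ⟨hnn, ?_⟩
    -- the comparison integrand
    set φ : ℝ → ℝ := fun s => α * v₂ s * Real.exp (-(α * (t - s))) with hφdef
    have hφcont : ContinuousOn φ (Set.Ici (0:ℝ)) := by
      apply (continuousOn_const.mul hv₂cont).mul
      exact (Real.continuous_exp.comp (by fun_prop)).continuousOn
    have hφint : ∀ a b : ℝ, 0 ≤ a → 0 ≤ b → IntervalIntegrable φ MeasureTheory.volume a b :=
      fun a b ha hb => (hφcont.mono (hsub a b ha hb)).intervalIntegrable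
    have step1 : Real.exp (-F t) * I ≤ ∫ s in (0:ℝ)..t, φ s := by
      rw [hIdef, ← intervalIntegral.integral_const_mul]
      apply intervalIntegral.integral_mono_on ht ?_ (hφint 0 t le_rfl ht)
      · intro s hs
        have h1 : Real.exp (-F t) * (α * v₂ s * Real.exp (F s))
            = α * v₂ s * Real.exp (F s - F t) := by
          rw [show F s - F t = -F t + F s by ring, Real.exp_add]
          ring
        rw [h1, hφdef]
        have h2 : F s - F t ≤ -(α * (t - s)) := by
          have := hFge s t hs.2
          linarith
        have h3 : 0 ≤ α * v₂ s := by
          have := hv₂nn s hs.1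
          positivity
        exact mul_le_mul_of_nonneg_left (Real.exp_le_exp.2 h2) h3
      · exact (continuous_const.continuousOn.mul
          ((continuousOn_const.mul (hv₂cont.mono (hsub 0 t le_rfl ht))).mul
            hexpFc.continuousOn)).intervalIntegrable
    have ht2 : (0:ℝ) ≤ t / 2 := by linarith
    have hsplit : (∫ s in (0:ℝ)..t, φ s)
        = (∫ s in (0:ℝ)..(t/2), φ s) + ∫ s in (t/2)..t, φ s :=
      (intervalIntegral.integral_add_adjacent_intervals (hφint 0 (t/2) le_rfl ht2)
        (hφint (t/2) t ht2 ht)).symm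
    -- first piece
    have piece1 : (∫ s in (0:ℝ)..(t/2), φ s) ≤ Real.exp (-(α * t / 2)) / 2 := by
      have hmono : (∫ s in (0:ℝ)..(t/2), φ s)
          ≤ ∫ s in (0:ℝ)..(t/2), α * (1/2) * Real.exp (-(α * (t - s))) := by
        apply intervalIntegral.integral_mono_on ht2 (hφint 0 (t/2) le_rfl ht2)
        · exact ((continuousOn_const).mul
            (Real.continuous_exp.comp (by fun_prop)).continuousOn).intervalIntegrable
        · intro s hs
          have h1 := hv₂le s hs.1
          have h2 := Real.exp_nonneg (-(α * (t - s)))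
          simp only [hφdef]
          exact mul_le_mul_of_nonneg_right (mul_le_mul_of_nonneg_left h1 hα.le) h2
      have hcomp : (∫ s in (0:ℝ)..(t/2), α * (1/2) * Real.exp (-(α * (t - s))))
          = (1/2) * Real.exp (-(α * (t - t/2))) - (1/2) * Real.exp (-(α * (t - 0))) := by
        have hder : ∀ s ∈ Set.uIcc (0:ℝ) (t/2),
            HasDerivAt (fun x => (1/2) * Real.exp (-(α * (t - x))))
              (α * (1/2) * Real.exp (-(α * (t - s)))) s := by
          intro s _
          have hlin : HasDerivAt (fun x : ℝ => -(α * (t - x))) α s := by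
            have h0 : HasDerivAt (fun x : ℝ => α * x - α * t) (α * 1) s :=
              ((hasDerivAt_id s).const_mul α).sub_const _
            have : (fun x : ℝ => -(α * (t - x))) = fun x : ℝ => α * x - α * t := by
              funext x; ring
            rw [this]
            simpa using h0
          have := (hlin.exp).const_mul (1/2 : ℝ)
          exact this.congr_deriv (by ring)
        rw [intervalIntegral.integral_eq_sub_of_hasDerivAt hder
          (((continuousOn_const).mul
            (Real.continuous_exp.comp (by fun_prop)).continuousOn).intervalIntegrable)]
      rw [hcomp] at hmono
      have harg : -(α * (t - t/2)) = -(α * t / 2) := by ring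
      rw [harg] at hmono
      have := Real.exp_nonneg (-(α * (t - 0)))
      linarith
    -- second piece
    have piece2 : (∫ s in (t/2)..t, φ s) ≤ α / (c * lam₂ * (1 + c / 4 * lam₂ * t)) := by
      have hmono : (∫ s in (t/2)..t, φ s) ≤ ∫ s in (t/2)..t, α * v₂ s := by
        apply intervalIntegral.integral_mono_on (by linarith) (hφint (t/2) t ht2 ht)
        · exact ((continuousOn_const.mul (hv₂cont.mono (hsub (t/2) t ht2 ht)))).intervalIntegrable
        · intro s hs
          have h1 : Real.exp (-(α * (t - s))) ≤ 1 := by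
            rw [Real.exp_le_one_iff]
            nlinarith [hs.2]
          have h3 : 0 ≤ α * v₂ s := by
            have := hv₂nn s (le_trans ht2 hs.1)
            positivity
          simp only [hφdef]
          nlinarith
      have hcomp : (∫ s in (t/2)..t, α * v₂ s)
          = (-(α / (c * lam₂)) * (1 + c / 2 * lam₂ * t)⁻¹)
            - (-(α / (c * lam₂)) * (1 + c / 2 * lam₂ * (t/2))⁻¹) := by
        have hder : ∀ s ∈ Set.uIcc (t/2) t,
            HasDerivAt (fun x => -(α / (c * lam₂)) * (1 + c / 2 * lam₂ * x)⁻¹)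
              (α * v₂ s) s := by
          intro s hs
          rw [Set.uIcc_of_le (by linarith)] at hs
          have hs0 : 0 ≤ s := le_trans ht2 hs.1
          have hd := hden s hs0
          have hlin : HasDerivAt (fun x : ℝ => 1 + c / 2 * lam₂ * x) (c / 2 * lam₂) s := by
            simpa using (((hasDerivAt_id s).const_mul (c / 2 * lam₂)).const_add 1)
          have hinv := (hlin.fun_inv (ne_of_gt hd)).const_mul (-(α / (c * lam₂)))
          refine hinv.congr_deriv ?_
          simp only [hv₂def]
          field_simp
        rw [intervalIntegral.integral_eq_sub_of_hasDerivAt hder]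
        apply ContinuousOn.intervalIntegrable
        exact continuousOn_const.mul (hv₂cont.mono (hsub (t/2) t ht2 ht))
      rw [hcomp] at hmono
      have heq : (1 : ℝ) + c / 2 * lam₂ * (t/2) = 1 + c / 4 * lam₂ * t := by ring
      rw [heq] at hmono
      have hA : (0:ℝ) < 1 + c / 4 * lam₂ * t := by
        have : 0 ≤ c / 4 * lam₂ * t := by positivity
        linarith
      have hB := hden t ht
      have h1 : α / (c * lam₂ * (1 + c / 4 * lam₂ * t))
          = α / (c * lam₂) * (1 + c / 4 * lam₂ * t)⁻¹ := by
        rw [div_mul_eq_div_div, div_eq_mul_inv]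
      have h2 : 0 ≤ α / (c * lam₂) * (1 + c / 2 * lam₂ * t)⁻¹ := by positivity
      rw [h1]
      nlinarith
    -- combine
    have hexp : Real.exp (-F t) ≤ Real.exp (-(α * t)) := by
      apply Real.exp_le_exp.2
      have := hFge 0 t ht
      rw [hF0] at this
      linarith
    have h1 : Real.exp (-F t) * (1/2) ≤ Real.exp (-(α * t)) / 2 := by linarith
    linarith [hrep, step1, hsplit, piece1, piece2]
  constructor
  · exact fun t ht => (main t ht).2
  · -- the bound tends to 0
    have e1 : Tendsto (fun t : ℝ => Real.exp (-(α * t)) / 2) atTop (𝓝 0) := by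
      have h : Tendsto (fun t : ℝ => -(α * t)) atTop atBot := by
        apply tendsto_neg_atTop_atBot.comp
        exact Tendsto.const_mul_atTop hα tendsto_id
      simpa using (Real.tendsto_exp_atBot.comp h).div_const 2
    have e2 : Tendsto (fun t : ℝ => Real.exp (-(α * t / 2)) / 2) atTop (𝓝 0) := by
      have h : Tendsto (fun t : ℝ => -(α * t / 2)) atTop atBot := by
        apply tendsto_neg_atTop_atBot.comp
        exact Tendsto.atTop_div_const (by norm_num) (Tendsto.const_mul_atTop hα tendsto_id)
      simpa using (Real.tendsto_exp_atBot.comp h).div_const 2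
    have e3 : Tendsto (fun t : ℝ => α / (c * lam₂ * (1 + c / 4 * lam₂ * t))) atTop (𝓝 0) := by
      apply Tendsto.div_atTop (tendsto_const_nhds)
      apply Tendsto.const_mul_atTop (by positivity : (0:ℝ) < c * lam₂)
      apply tendsto_atTop_add_const_left
      exact Tendsto.const_mul_atTop (by positivity : (0:ℝ) < c / 4 * lam₂) tendsto_id
    have hB : Tendsto (fun t : ℝ => Real.exp (-(α * t)) / 2 + Real.exp (-(α * t / 2)) / 2 +
        α / (c * lam₂ * (1 + c / 4 * lam₂ * t))) atTop (𝓝 0) := by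
      simpa using (e1.add e2).add e3
    apply tendsto_of_tendsto_of_tendsto_of_le_of_le' tendsto_const_nhds hB
    · exact (eventually_ge_atTop (0:ℝ)).mono fun t ht => (main t ht).1
    · exact (eventually_ge_atTop (0:ℝ)).mono fun t ht => (main t ht).2
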